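/- The bilinear form β on the spin representation Cl(V)f defined by f* a* b f = β(af, bf)·f is nondegenerate and Spin(V)-invariant; it is symmetric if n ≡ 0,1 (mod 4) and skew-symmetric if n ≡ 2,3 (mod 4); and the two half-spin representations Cl⁺(V)f, Cl⁻(V)f are orthogonal complements of each other under β when n is odd, while each is nondegenerately paired with itself when n is even. -/

import Mathlib

set_option linter.unusedSectionVars false
set_option linter.unnecessarySimpa false
set_option maxHeartbeats 1000000

open CliffordAlgebra

section Aux

variable {K V : Type*} [Field K] [CharZero K] [AddCommGroup V] [Module K V]
variable (q : QuadraticForm K V)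

/-- moving an anticommuting element across a product of `ι`'s. -/
lemma aux_anticomm_prod (a : V) (l : List V)
    (h : ∀ v ∈ l, ι q a * ι q v = - (ι q v * ι q a)) :
    ι q a * (l.map (ι q)).prod = ((-1 : K) ^ l.length) • ((l.map (ι q)).prod * ι q a) := by
  induction l with
  | nil => simp
  | cons v l ih =>
      have hv := h v (List.mem_cons_self)
      have ih' := ih (fun w hw => h w (List.mem_cons_of_mem _ hw))
      simp only [List.map_cons, List.prod_cons, List.length_cons]
      calc ι q a * (ι q v * (l.map (ι q)).prod)
          = (ι q a * ι q v) * (l.map (ι q)).prod := by rw [mul_assoc]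
        _ = -(ι q v * (ι q a * (l.map (ι q)).prod)) := by rw [hv]; simp [mul_assoc]
        _ = -(ι q v * (((-1 : K) ^ l.length) • ((l.map (ι q)).prod * ι q a))) := by rw [ih']
        _ = ((-1 : K) ^ (l.length + 1)) • (ι q v * (l.map (ι q)).prod * ι q a) := by
            rw [mul_smul_comm, pow_succ]
            rw [← neg_smul]
            ring_nf
            rw [mul_assoc]

/-- reversing a product of pairwise anticommuting `ι`'s. -/
lemma aux_reverse_prod (l : List V)
    (h : ∀ v ∈ l, ∀ w ∈ l, ι q v * ι q w = - (ι q w * ι q v)) :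
    reverse ((l.map (ι q)).prod)
      = ((-1 : K) ^ (l.length.choose 2)) • (l.map (ι q)).prod := by
  rw [reverse_prod_map_ι]
  induction l with
  | nil => simp
  | cons v l ih =>
      have hv : ∀ w ∈ l, ι q v * ι q w = -(ι q w * ι q v) := fun w hw =>
        h v (List.mem_cons_self) w (List.mem_cons_of_mem _ hw)
      have ih' := ih (fun a ha b hb =>
        h a (List.mem_cons_of_mem _ ha) b (List.mem_cons_of_mem _ hb))
      have hchoose : (l.length + 1).choose 2 = l.length.choose 2 + l.length := by
        rw [Nat.choose_succ_succ, Nat.choose_one_right, add_comm]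
      simp only [List.reverse_cons, List.map_append, List.prod_append, List.map_cons,
        List.prod_cons, List.map_nil, List.prod_nil, mul_one, List.length_cons, hchoose]
      rw [ih', smul_mul_assoc]
      have := aux_anticomm_prod q v l hv
      have h2 : (l.map (ι q)).prod * ι q v = ((-1 : K) ^ l.length) • (ι q v * (l.map (ι q)).prod) := by
        rw [this, smul_smul]
        simp [← pow_add]
      rw [h2, smul_smul, pow_add]

/-- a product of `ι`'s is homogeneous. -/
lemma aux_prod_mem_evenOdd (l : List V) :
    (l.map (ι q)).prod ∈ evenOdd q (l.length : ZMod 2) := by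
  induction l with
  | nil => simpa using SetLike.one_mem_graded (evenOdd q)
  | cons v l ih =>
      simp only [List.map_cons, List.prod_cons, List.length_cons]
      have : ((l.length + 1 : ℕ) : ZMod 2) = 1 + (l.length : ZMod 2) := by
        push_cast; ring
      rw [this]
      exact SetLike.mul_mem_graded (ι_mem_evenOdd_one q v) ih

/-- elements homogeneous of two different degrees vanish. -/
lemma aux_eq_zero_of_mem_ne {x : CliffordAlgebra q} {i j : ZMod 2}
    (hi : x ∈ evenOdd q i) (hj : x ∈ evenOdd q j) (hij : i ≠ j) : x = 0 := by
  have hd : Disjoint (evenOdd q 0) (evenOdd q 1) := (evenOdd_isCompl q).disjoint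
  fin_cases i <;> fin_cases j <;> first
    | exact absurd rfl hij
    | exact Submodule.disjoint_def.mp hd x hi hj
    | exact Submodule.disjoint_def.mp hd x hj hi

lemma aux_choose_two_mod (n : ℕ) : n.choose 2 % 2 = if n % 4 ≤ 1 then 0 else 1 := by
  induction n with
  | zero => simp
  | succ n ih =>
      have hrec : (n + 1).choose 2 = n.choose 2 + n := by
        rw [Nat.choose_succ_succ, Nat.choose_one_right, add_comm]
      rw [hrec]
      split_ifs with h1 <;> [skip; skip] <;> (revert ih; split_ifs with h2 <;> omega)


/-- the product of `ι`'s of a linearly independent family in the exterior algebra is nonzero. -/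
lemma aux_ext_prod_ne_zero {n : ℕ} (f : Fin n → V) (hf : LinearIndependent K f) :
    ((List.ofFn f).map (ExteriorAlgebra.ι K)).prod ≠ 0 := by
  classical
  have hinj : Function.Injective f := hf.injective
  have hs : LinearIndepOn K id (Set.range f) := hf.linearIndepOn_id
  let b : Module.Basis _ K V := Module.Basis.extend hs
  let emb : Fin n → hs.extend (Set.subset_univ _) := fun i =>
    ⟨f i, hs.subset_extend _ ⟨i, rfl⟩⟩
  have hembinj : Function.Injective emb := fun i j hij => hinj (congrArg Subtype.val hij)
  have hb : ∀ i, b (emb i) = f i := fun i => Module.Basis.extend_apply_self hs _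
  let φlin : V →ₗ[K] (Fin n → K) := LinearMap.pi fun i => b.coord (emb i)
  let φ : V [⋀^Fin n]→ₗ[K] K :=
    (Matrix.detRowAlternating : (Fin n → K) [⋀^Fin n]→ₗ[K] K).compLinearMap φlin
  have hφ : φ f = 1 := by
    have h1 : (Matrix.of fun i j => φlin (f i) j) = (1 : Matrix (Fin n) (Fin n) K) := by
      ext i j
      simp only [Matrix.of_apply, φlin, LinearMap.pi_apply]
      rw [← hb i, Module.Basis.coord_apply, Module.Basis.repr_self]
      rw [Finsupp.single_apply, Matrix.one_apply]
      simp [eq_comm, hembinj.eq_iff]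
    have h2 : φ f = Matrix.det (Matrix.of fun i j => φlin (f i) j) := rfl
    rw [h2, h1, Matrix.det_one]
  intro hzero
  have hιM : ExteriorAlgebra.ιMulti K n f = 0 := by
    rw [ExteriorAlgebra.ιMulti_apply]
    simpa [List.map_ofFn, Function.comp_def] using hzero
  have := ExteriorAlgebra.liftAlternating_apply_ιMulti (R := K) (M := V)
    (Pi.single n φ) f
  rw [hιM, map_zero, Pi.single_eq_same, hφ] at this
  exact one_ne_zero this.symm


lemma aux_contract_zero (d : Module.Dual K V) (l : List V) (h : ∀ v ∈ l, d v = 0) :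
    contractLeft (Q := (0 : QuadraticForm K V)) d ((l.map (ι (0 : QuadraticForm K V))).prod) = 0 := by
  induction l with
  | nil => simpa using contractLeft_one (Q := (0 : QuadraticForm K V)) (d := d)
  | cons v l ih =>
      simp only [List.map_cons, List.prod_cons]
      rw [contractLeft_ι_mul, ih (fun w hw => h w (List.mem_cons_of_mem _ hw)),
        h v (List.mem_cons_self)]
      simp

lemma aux_changeForm_prod (q : QuadraticForm K V) (l : List V)
    (hB : ∀ v ∈ l, ∀ w ∈ l, QuadraticMap.associated (R := K) (-q) v w = 0) :
    changeForm (changeForm.associated_neg_proof (Q := q)) ((l.map (ι q)).prod)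
      = (l.map (ι (0 : QuadraticForm K V))).prod := by
  induction l with
  | nil => simpa using changeForm_one (changeForm.associated_neg_proof (Q := q))
  | cons v l ih =>
      simp only [List.map_cons, List.prod_cons]
      rw [changeForm_ι_mul, ih (fun a ha b hb =>
        hB a (List.mem_cons_of_mem _ ha) b (List.mem_cons_of_mem _ hb)),
        aux_contract_zero _ l (fun w hw =>
          hB v (List.mem_cons_self) w (List.mem_cons_of_mem _ hw))]
      simp

lemma aux_assoc_neg_eq_zero (q : QuadraticForm K V) {v w : V}
    (h : QuadraticMap.polar q v w = 0) :
    QuadraticMap.associated (R := K) (-q) v w = 0 := by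
  have h2 := QuadraticMap.two_nsmul_associated K (-q)
  have key : QuadraticMap.polar (⇑(-q)) v w = 0 := by
    have h' : q (v + w) - q v - q w = 0 := h
    show (-q) (v + w) - (-q) v - (-q) w = 0
    simp only [QuadraticMap.neg_apply]
    linear_combination -h' 
  have h3 : ((2 • (QuadraticMap.associatedHom K) (-q) :
      LinearMap.BilinMap K V K) v) w = QuadraticMap.polar (⇑(-q)) v w := by
    rw [h2, QuadraticMap.polarBilin_apply_apply]
  rw [LinearMap.smul_apply, LinearMap.smul_apply, key] at h3
  have h4 : (2 : K) * ((QuadraticMap.associatedHom K) (-q) v) w = 0 := by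
    rw [← h3]; push_cast [nsmul_eq_mul]; ring
  have := mul_eq_zero.mp h4
  simpa using this

lemma aux_F_ne_zero (q : QuadraticForm K V) {n : ℕ} (f : Fin n → V)
    (hf : LinearIndependent K f)
    (hpolar : ∀ v ∈ List.ofFn f, ∀ w ∈ List.ofFn f, QuadraticMap.polar q v w = 0) :
    ((List.ofFn f).map (ι q)).prod ≠ 0 := by
  intro h0
  have hcf := aux_changeForm_prod q (List.ofFn f)
    (fun v hv w hw => aux_assoc_neg_eq_zero q (hpolar v hv w hw))
  rw [h0, map_zero] at hcf
  exact aux_ext_prod_ne_zero f hf hcf.symm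


lemma aux_dual_family (q : QuadraticForm K V) [FiniteDimensional K V]
    (hq : (QuadraticMap.polarBilin q).Nondegenerate)
    {n : ℕ} (f : Fin n → V) (hf : LinearIndependent K f)
    (hpolar : ∀ i j, QuadraticMap.polar q (f i) (f j) = 0) :
    ∃ e : Fin n → V,
      (∀ i j, QuadraticMap.polar q (e i) (f j) = if i = j then 1 else 0) ∧
      (∀ i j, i ≠ j → QuadraticMap.polar q (e i) (e j) = 0) := by
  classical
  set B := QuadraticMap.polarBilin q with hB
  have hsymm : ∀ x y : V, B x y = B y x := fun x y => by
    simp only [hB, QuadraticMap.polarBilin_apply_apply]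
    exact QuadraticMap.polar_comm _ x y
  -- B is injective as a map to the dual, hence surjective
  have hinj : Function.Injective B := by
    rw [← LinearMap.ker_eq_bot]
    apply (Submodule.eq_bot_iff _).mpr
    intro x hx
    exact hq.1 x fun y => by
      rw [LinearMap.mem_ker] at hx; rw [hx]; rfl
  have hsurj : Function.Surjective B :=
    (LinearMap.injective_iff_surjective_of_finrank_eq_finrank
      (Subspace.dual_finrank_eq).symm).mp hinj
  -- coordinate functionals dual to `f`
  have hs : LinearIndepOn K id (Set.range f) := hf.linearIndepOn_id
  let b : Module.Basis _ K V := Module.Basis.extend hs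
  let emb : Fin n → hs.extend (Set.subset_univ _) := fun i =>
    ⟨f i, hs.subset_extend _ ⟨i, rfl⟩⟩
  have hembinj : Function.Injective emb := fun i j hij =>
    hf.injective (congrArg Subtype.val hij)
  have hb : ∀ i, b (emb i) = f i := fun i => Module.Basis.extend_apply_self hs _
  have hcoord : ∀ i j, b.coord (emb i) (f j) = if i = j then 1 else 0 := by
    intro i j
    rw [← hb j, Module.Basis.coord_apply, Module.Basis.repr_self, Finsupp.single_apply]
    simp [eq_comm, hembinj.eq_iff]
  choose e' he' using fun i => hsurj (b.coord (emb i))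
  have he'f : ∀ i j, B (e' i) (f j) = if i = j then 1 else 0 := fun i j => by
    rw [he' i]; exact hcoord i j
  -- correct to make the `e` family isotropic between distinct indices
  refine ⟨fun i => e' i - ∑ k, (2⁻¹ * B (e' i) (e' k)) • f k, ?_, ?_⟩ <;>
    intro i j
  · show B _ (f j) = _
    rw [map_sub, LinearMap.sub_apply, map_sum, LinearMap.sum_apply]
    rw [he'f i j]
    have : ∀ k ∈ Finset.univ, (B ((2⁻¹ * B (e' i) (e' k)) • f k)) (f j) = 0 := by
      intro k _
      rw [map_smul, LinearMap.smul_apply]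
      have : B (f k) (f j) = 0 := hpolar k j
      rw [this, smul_zero]
    rw [Finset.sum_congr rfl this, Finset.sum_const_zero, sub_zero]
  · intro hij
    show B _ _ = 0
    have expand1 : ∀ (x : V) (c : Fin n → K) (y : V),
        B (x - ∑ k, (c k) • f k) y = B x y - ∑ k, c k * B (f k) y := by
      intro x c y
      rw [map_sub, LinearMap.sub_apply, map_sum, LinearMap.sum_apply]
      congr 1
      exact Finset.sum_congr rfl fun k _ => by
        rw [map_smul, LinearMap.smul_apply, smul_eq_mul]
    have expand2 : ∀ (x : V) (c : Fin n → K) (y : V),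
        B y (x - ∑ k, (c k) • f k) = B y x - ∑ k, c k * B y (f k) := by
      intro x c y
      rw [map_sub, map_sum]
      congr 1
      exact Finset.sum_congr rfl fun k _ => by rw [map_smul, smul_eq_mul]
    rw [expand1]
    have hterm1 : B (e' i) (e' j - ∑ k, (2⁻¹ * B (e' j) (e' k)) • f k)
        = B (e' i) (e' j) - 2⁻¹ * B (e' j) (e' i) := by
      rw [expand2]
      congr 1
      rw [Finset.sum_eq_single i]
      · rw [he'f i i, if_pos rfl, mul_one]
      · intro k _ hk
        rw [he'f i k, if_neg (Ne.symm hk), mul_zero]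
      · simp
    have hterm2 : ∑ k, (2⁻¹ * B (e' i) (e' k))
          * B (f k) (e' j - ∑ l, (2⁻¹ * B (e' j) (e' l)) • f l)
        = 2⁻¹ * B (e' i) (e' j) := by
      have hfk : ∀ k, B (f k) (e' j - ∑ l, (2⁻¹ * B (e' j) (e' l)) • f l)
          = if j = k then 1 else 0 := by
        intro k
        rw [expand2]
        have hz : ∑ l, (2⁻¹ * B (e' j) (e' l)) * B (f k) (f l) = 0 :=
          Finset.sum_eq_zero fun l _ => by
            have : B (f k) (f l) = 0 := hpolar k l
            rw [this, mul_zero]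
        rw [hz, sub_zero, hsymm (f k) (e' j), he'f j k]
      rw [Finset.sum_congr rfl fun k _ => by rw [hfk k]]
      rw [Finset.sum_eq_single j]
      · rw [if_pos rfl, mul_one]
      · intro k _ hk
        rw [if_neg (Ne.symm hk), mul_zero]
      · simp
    rw [hterm1, hterm2, hsymm (e' j) (e' i)]
    ring


lemma aux_one_mem_span {n : ℕ} (e f : Fin n → V)
    (h1 : ∀ i, ι q (e i) * ι q (f i) + ι q (f i) * ι q (e i) = 1)
    (h2 : ∀ i j, i ≠ j → ι q (e i) * ι q (f j) = - (ι q (f j) * ι q (e i))) :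
    (1 : CliffordAlgebra q) ∈ Submodule.span K
      {z : CliffordAlgebra q | ∃ x y, z = x * ((List.ofFn f).map (ι q)).prod * y} := by
  classical
  set F := ((List.ofFn f).map (ι q)).prod with hF
  set T := Submodule.span K {z : CliffordAlgebra q | ∃ x y, z = x * F * y} with hT
  have hTl : ∀ (a : CliffordAlgebra q) {u}, u ∈ T → a * u ∈ T := by
    intro a u hu
    induction hu using Submodule.span_induction with
    | mem z hz =>
        obtain ⟨x, y, rfl⟩ := hz
        exact Submodule.subset_span ⟨a * x, y, by simp [mul_assoc]⟩
    | zero => simpa using Submodule.zero_mem T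
    | add u v _ _ hu hv => rw [mul_add]; exact Submodule.add_mem T hu hv
    | smul c u _ hu => rw [mul_smul_comm]; exact Submodule.smul_mem T c hu
  have hTr : ∀ (a : CliffordAlgebra q) {u}, u ∈ T → u * a ∈ T := by
    intro a u hu
    induction hu using Submodule.span_induction with
    | mem z hz =>
        obtain ⟨x, y, rfl⟩ := hz
        exact Submodule.subset_span ⟨x, y * a, by simp [mul_assoc]⟩
    | zero => simpa using Submodule.zero_mem T
    | add u v _ _ hu hv => rw [add_mul]; exact Submodule.add_mem T hu hv
    | smul c u _ hu => rw [smul_mul_assoc]; exact Submodule.smul_mem T c hu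
  have key : ∀ k, k ≤ n → (((List.ofFn f).drop k).map (ι q)).prod ∈ T := by
    intro k
    induction k with
    | zero =>
        intro _
        exact Submodule.subset_span ⟨1, 1, by simp [hF]⟩
    | succ k ih =>
        intro hk
        have hkn : k < n := hk
        have ihk := ih (le_of_lt hkn)
        set i : Fin n := ⟨k, hkn⟩ with hi
        have hdrop : (List.ofFn f).drop k = f i :: (List.ofFn f).drop (k + 1) := by
          rw [List.drop_eq_getElem_cons (by simpa using hkn)]
          congr 1
          simp [hi]
        set G : CliffordAlgebra q := (((List.ofFn f).drop (k + 1)).map (ι q)).prod with hG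
        have hGmem : ι q (f i) * G ∈ T := by
          have : (((List.ofFn f).drop k).map (ι q)).prod = ι q (f i) * G := by
            rw [hdrop]; simp [hG]
          rw [← this]; exact ihk
        have hanti : ∀ v ∈ (List.ofFn f).drop (k + 1),
            ι q (e i) * ι q v = - (ι q v * ι q (e i)) := by
          intro v hv
          obtain ⟨m, hm, hvm⟩ := List.mem_iff_getElem.mp hv
          have hlen : k + 1 + m < n := by
            have := hm
            simp only [List.length_drop, List.length_ofFn] at this
            omega
          have : v = f ⟨k + 1 + m, hlen⟩ := by
            rw [← hvm, List.getElem_drop, List.getElem_ofFn]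
          rw [this]
          exact h2 i _ (by simp [hi, Fin.ext_iff]; omega)
        have hswap := aux_anticomm_prod q (e i) ((List.ofFn f).drop (k + 1)) hanti
        rw [← hG] at hswap
        have heq : G = ι q (e i) * (ι q (f i) * G)
            + ((-1 : K) ^ ((List.ofFn f).drop (k + 1)).length) • ((ι q (f i) * G) * ι q (e i)) := by
          conv_lhs => rw [← one_mul G, ← h1 i]
          rw [add_mul, mul_assoc, mul_assoc, hswap, mul_smul_comm, mul_assoc]
        show G ∈ T
        rw [heq]
        exact Submodule.add_mem T (hTl _ hGmem) (Submodule.smul_mem T _ (hTr _ hGmem))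
  have hn := key n le_rfl
  have hnil : (List.ofFn f).drop n = [] := by
    apply List.drop_eq_nil_of_le
    simp
  rw [hnil] at hn
  simpa using hn


end Aux

/-- The bilinear form `(v|w) = ½(q(v+w) − q(v) − q(w))` associated to `q`. -/
noncomputable def halfPolar {K V : Type*} [Field K] [CharZero K] [AddCommGroup V] [Module K V]
    (q : QuadraticForm K V) : V →ₗ[K] Module.Dual K V :=
  (2⁻¹ : K) • (QuadraticMap.polarBilin q)

theorem stmt13 {K V : Type*} [Field K] [IsAlgClosed K] [CharZero K]
    [AddCommGroup V] [Module K V] [FiniteDimensional K V]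
    (q : QuadraticForm K V) (n : ℕ)
    (hdim : Module.finrank K V = 2 * n)
    (hq : (QuadraticMap.polarBilin q).Nondegenerate)
    (f : Fin n → V) (hf : LinearIndependent K f)
    (hff : ∀ i j, halfPolar q (f i) (f j) = 0)
    -- the bilinear form β, via its defining property (af)*(bf) = β(af,bf)·f
    (β : CliffordAlgebra q → CliffordAlgebra q → K)
    (hβ : ∀ a b : CliffordAlgebra q,
      reverse (a * ((List.ofFn f).map (ι q)).prod) * (b * ((List.ofFn f).map (ι q)).prod)
        = β a b • ((List.ofFn f).map (ι q)).prod) :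
    -- β is Spin(V)-invariant …
    (∀ x a b : CliffordAlgebra q,
      (∀ v : V, ∃ w : V, x * ι q v = ι q w * x) →
      x * reverse x = 1 → reverse x * x = 1 →
      β (x * a) (x * b) = β a b) ∧
    -- … and nondegenerate
    (∀ a : CliffordAlgebra q, (∀ b : CliffordAlgebra q, β a b = 0) →
      a * ((List.ofFn f).map (ι q)).prod = 0) ∧
    -- symmetric when n ≡ 0,1 (mod 4)
    ((n % 4 = 0 ∨ n % 4 = 1) → ∀ a b, β a b = β b a) ∧
    -- skew-symmetric when n ≡ 2,3 (mod 4)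
    ((n % 4 = 2 ∨ n % 4 = 3) → ∀ a b, β a b = - β b a) ∧
    -- for n odd, the two half-spin representations pair with each other
    (Odd n →
      (∀ a ∈ evenOdd q 0, ∀ b ∈ evenOdd q 0, β a b = 0) ∧
      (∀ a ∈ evenOdd q 1, ∀ b ∈ evenOdd q 1, β a b = 0)) ∧
    -- for n even, each half-spin representation is nondegenerately self-paired
    (Even n →
      (∀ a ∈ evenOdd q 0, ∀ b ∈ evenOdd q 1, β a b = 0) ∧
      (∀ a ∈ evenOdd q 1, ∀ b ∈ evenOdd q 0, β a b = 0) ∧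
      (∀ a ∈ evenOdd q 0, (∀ b ∈ evenOdd q 0, β a b = 0) →
        a * ((List.ofFn f).map (ι q)).prod = 0) ∧
      (∀ a ∈ evenOdd q 1, (∀ b ∈ evenOdd q 1, β a b = 0) →
        a * ((List.ofFn f).map (ι q)).prod = 0)) := by
  classical
  set F := ((List.ofFn f).map (ι q)).prod with hFdef
  -- basic consequences of `hff`
  have hpolarf : ∀ i j, QuadraticMap.polar q (f i) (f j) = 0 := by
    intro i j
    have h := hff i j
    simp only [halfPolar, LinearMap.smul_apply, smul_eq_mul,
      QuadraticMap.polarBilin_apply_apply] at h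
    rcases mul_eq_zero.mp h with h' | h'
    · exact absurd h' (inv_ne_zero two_ne_zero)
    · exact h'
  have hpolarlist : ∀ v ∈ List.ofFn f, ∀ w ∈ List.ofFn f,
      QuadraticMap.polar q v w = 0 := by
    intro v hv w hw
    obtain ⟨i, rfl⟩ := (List.mem_ofFn).mp hv
    obtain ⟨j, rfl⟩ := (List.mem_ofFn).mp hw
    exact hpolarf i j
  have hanti : ∀ v ∈ List.ofFn f, ∀ w ∈ List.ofFn f,
      ι q v * ι q w = - (ι q w * ι q v) := by
    intro v hv w hw
    apply eq_neg_of_add_eq_zero_left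
    rw [ι_mul_ι_add_swap, hpolarlist v hv w hw, map_zero]
  have hFne : F ≠ 0 := aux_F_ne_zero q f hf hpolarlist
  have hsmul_inj : ∀ c c' : K, c • F = c' • F → c = c' := by
    intro c c' h
    have : (c - c') • F = 0 := by rw [sub_smul, h, sub_self]
    rcases smul_eq_zero.mp this with h' | h'
    · exact sub_eq_zero.mp h'
    · exact absurd h' hFne
  have hlen : (List.ofFn f).length = n := List.length_ofFn
  have hFmem : F ∈ evenOdd q ((n : ℕ) : ZMod 2) := by
    have := aux_prod_mem_evenOdd q (List.ofFn f)
    rwa [hlen] at this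
  have hrevF : reverse F = ((-1 : K) ^ (n.choose 2)) • F := by
    have := aux_reverse_prod q (List.ofFn f) hanti
    rwa [hlen] at this
  -- nondegeneracy
  have hnd : ∀ a : CliffordAlgebra q, (∀ b, β a b = 0) → a * F = 0 := by
    intro a hab
    have hz : ∀ b, reverse (a * F) * (b * F) = 0 := fun b => by
      rw [hβ a b, hab b, zero_smul]
    obtain ⟨e, he1, he2⟩ := aux_dual_family q hq f hf hpolarf
    have h1 : ∀ i, ι q (e i) * ι q (f i) + ι q (f i) * ι q (e i) = 1 := fun i => by
      rw [ι_mul_ι_add_swap, he1 i i, if_pos rfl, map_one]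
    have h2 : ∀ i j, i ≠ j → ι q (e i) * ι q (f j) = - (ι q (f j) * ι q (e i)) := by
      intro i j hij
      apply eq_neg_of_add_eq_zero_left
      rw [ι_mul_ι_add_swap, he1 i j, if_neg hij, map_zero]
    have hspan := aux_one_mem_span q e f h1 h2
    have hker : Submodule.span K {z : CliffordAlgebra q | ∃ x y, z = x * F * y}
        ≤ LinearMap.ker (LinearMap.mulLeft K (reverse (a * F))) := by
      rw [Submodule.span_le]
      rintro z ⟨x, y, rfl⟩
      simp only [SetLike.mem_coe, LinearMap.mem_ker, LinearMap.mulLeft_apply]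
      calc reverse (a * F) * (x * F * y) = (reverse (a * F) * (x * F)) * y :=
            (mul_assoc _ _ _).symm
        _ = 0 := by rw [hz x, zero_mul]
    have h1mem := hker hspan
    simp only [LinearMap.mem_ker, LinearMap.mulLeft_apply, mul_one] at h1mem
    have h2' : reverse (reverse (a * F)) = reverse (0 : CliffordAlgebra q) := by
      rw [h1mem]
    rwa [reverse_reverse, map_zero] at h2'
  -- symmetry twist
  have hsym : ∀ a b, β b a = ((-1 : K) ^ (n.choose 2)) * β a b := by
    intro a b
    have h1 : reverse (reverse (a * F) * (b * F)) = reverse (β a b • F) := by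
      rw [hβ a b]
    rw [reverse.map_mul, reverse_reverse, map_smul, hrevF, hβ b a, smul_smul, mul_comm] at h1
    exact hsmul_inj _ _ h1
  -- parity vanishing
  have hzz : ∀ z : ZMod 2, z + z = 0 := by decide
  have hpar : ∀ (i j : ZMod 2), i + j ≠ ((n : ℕ) : ZMod 2) →
      ∀ a ∈ evenOdd q i, ∀ b ∈ evenOdd q j, β a b = 0 := by
    intro i j hij a ha b hb
    have hmem1 : reverse (a * F) * (b * F) ∈ evenOdd q ((i + n) + (j + n)) :=
      SetLike.mul_mem_graded
        ((reverse_mem_evenOdd_iff q).mpr (SetLike.mul_mem_graded ha hFmem))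
        (SetLike.mul_mem_graded hb hFmem)
    have hcast : (i + (n : ZMod 2)) + (j + (n : ZMod 2)) = i + j := by
      have := hzz (n : ZMod 2)
      linear_combination this
    rw [hcast, hβ a b] at hmem1
    have hmem2 : β a b • F ∈ evenOdd q ((n : ℕ) : ZMod 2) :=
      Submodule.smul_mem _ _ hFmem
    have h0 : β a b • F = 0 := aux_eq_zero_of_mem_ne q hmem1 hmem2 hij
    rcases smul_eq_zero.mp h0 with h' | h'
    · exact h'
    · exact absurd h' hFne
  -- additivity in the second argument
  have hβadd : ∀ a b c, β a (b + c) = β a b + β a c := by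
    intro a b c
    have h1 := hβ a (b + c)
    rw [add_mul, mul_add, hβ a b, hβ a c, ← add_smul] at h1
    exact (hsmul_inj _ _ h1).symm
  -- casts
  have hcast_even : Even n → ((n : ℕ) : ZMod 2) = 0 := by
    intro h
    exact (ZMod.natCast_eq_zero_iff n 2).mpr h.two_dvd
  have hcast_odd : Odd n → ((n : ℕ) : ZMod 2) = 1 := by
    intro h
    obtain ⟨k, rfl⟩ := h
    push_cast
    have h2 : ((2 : ℕ) : ZMod 2) = 0 := by decide
    push_cast at h2 ⊢
    rw [mul_comm]
    rw [show ((k : ZMod 2) * 2) = (k : ZMod 2) + (k : ZMod 2) by ring]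
    rw [hzz (k : ZMod 2), zero_add]
  refine ⟨?_, hnd, ?_, ?_, ?_, ?_⟩
  · -- invariance
    intro x a b _ _ hx2
    have h1 := hβ (x * a) (x * b)
    have h2 : reverse (x * a * F) * (x * b * F) = reverse (a * F) * (b * F) := by
      calc reverse (x * a * F) * (x * b * F)
          = (reverse (a * F) * reverse x) * (x * (b * F)) := by
            rw [mul_assoc x a F, reverse.map_mul, mul_assoc x b F]
        _ = reverse (a * F) * ((reverse x * x) * (b * F)) := by
            rw [mul_assoc, ← mul_assoc (reverse x)]
        _ = reverse (a * F) * (b * F) := by rw [hx2, one_mul]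
    rw [h2, hβ a b] at h1
    exact (hsmul_inj _ _ h1).symm
  · -- symmetric case
    intro hmod a b
    have hc2 : Even (n.choose 2) := by
      have := aux_choose_two_mod n
      rw [if_pos (by omega)] at this
      exact Nat.even_iff.mpr this
    rw [hsym b a, hc2.neg_one_pow, one_mul]
  · -- skew-symmetric case
    intro hmod a b
    have hc2 : Odd (n.choose 2) := by
      have := aux_choose_two_mod n
      rw [if_neg (by omega)] at this
      exact Nat.odd_iff.mpr this
    rw [hsym b a, hc2.neg_one_pow, neg_one_mul]
  · -- odd n
    intro hodd
    constructor
    · intro a ha b hb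
      exact hpar 0 0 (by rw [hcast_odd hodd]; decide) a ha b hb
    · intro a ha b hb
      exact hpar 1 1 (by rw [hcast_odd hodd]; decide) a ha b hb
  · -- even n
    intro heven
    have hc := hcast_even heven
    refine ⟨fun a ha b hb => hpar 0 1 (by rw [hc]; decide) a ha b hb,
      fun a ha b hb => hpar 1 0 (by rw [hc]; decide) a ha b hb, ?_, ?_⟩
    · intro a ha hab0
      apply hnd
      intro b
      have hb : b ∈ evenOdd q 0 ⊔ evenOdd q 1 := by
        rw [(evenOdd_isCompl q).sup_eq_top]; trivial
      obtain ⟨b0, hb0, b1, hb1, rfl⟩ := Submodule.mem_sup.mp hb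
      rw [hβadd, hab0 b0 hb0, hpar 0 1 (by rw [hc]; decide) a ha b1 hb1, add_zero]
    · intro a ha hab1
      apply hnd
      intro b
      have hb : b ∈ evenOdd q 0 ⊔ evenOdd q 1 := by
        rw [(evenOdd_isCompl q).sup_eq_top]; trivial
      obtain ⟨b0, hb0, b1, hb1, rfl⟩ := Submodule.mem_sup.mp hb
      rw [hβadd, hpar 1 0 (by rw [hc]; decide) a ha b0 hb0, hab1 b1 hb1, zero_add]
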